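/- arXiv:2201.07595 — 2 statements merged into one kernel-verified Lean document; each statement's English description precedes it below -/
import Mathlib

section
/- For all integers d ≥ 2 and k > d there exists a constant C = C(d,k) such that for every finite d-degenerate simple graph G on n vertices, any two proper k-colorings of G can be transformed into one another by a sequence of at most C · d^n Kempe changes; in particular K_k(G) has diameter at most C · d^n. -/
/-- `φ` is a proper `k`-coloring of `G`: adjacent vertices get different colors. -/
def IsProperColoring {V : Type*} (G : SimpleGraph V) (k : ℕ) (φ : V → Fin k) : Prop :=
  ∀ ⦃u v : V⦄, G.Adj u v → φ u ≠ φ v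

/-- The spanning subgraph of `G` keeping only edges between vertices colored `a` or `b`:
its connected components meeting the `a/b`-colored vertices are the Kempe chains. -/
def kempeSub {V : Type*} (G : SimpleGraph V) {k : ℕ} (φ : V → Fin k) (a b : Fin k) :
    SimpleGraph V where
  Adj x y := G.Adj x y ∧ (φ x = a ∨ φ x = b) ∧ (φ y = a ∨ φ y = b)
  symm := ⟨fun x y ⟨h, hx, hy⟩ => ⟨h.symm, hy, hx⟩⟩
  loopless := ⟨fun x h => G.irrefl h.1⟩

/-- `ψ` is obtained from `φ` by a single Kempe change in the pair of colors `{a, b}`: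
the colors `a` and `b` are swapped on the Kempe chain containing some vertex `v`
colored `a` or `b`, and all other vertices keep their color. -/
def KempeStepAB {V : Type*} (G : SimpleGraph V) {k : ℕ} (a b : Fin k) (φ ψ : V → Fin k) :
    Prop :=
  a ≠ b ∧ ∃ v : V, (φ v = a ∨ φ v = b) ∧
    (∀ u : V, (kempeSub G φ a b).Reachable v u → ψ u = Equiv.swap a b (φ u)) ∧
    (∀ u : V, ¬ (kempeSub G φ a b).Reachable v u → ψ u = φ u)

/-- `ψ` is obtained from `φ` by a single Kempe change (in some pair of colors). -/
def KempeStep {V : Type*} (G : SimpleGraph V) (k : ℕ) (φ ψ : V → Fin k) : Prop :=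
  ∃ a b : Fin k, KempeStepAB G a b φ ψ

/-- `G` is `d`-degenerate: every (finite, nonempty) subgraph has a vertex of degree
at most `d`, i.e. every finite nonempty vertex subset `S` contains a vertex with at
most `d` neighbors inside `S`. -/
def Degenerate {V : Type*} (d : ℕ) (G : SimpleGraph V) : Prop :=
  ∀ S : Set V, S.Finite → S.Nonempty → ∃ v ∈ S, {u ∈ S | G.Adj v u}.ncard ≤ d

-- ===== auxiliary development =====

section Aux

variable {V : Type*} {k : ℕ}

/-- Delete all edges at a vertex. -/
def delVert (H : SimpleGraph V) (v : V) : SimpleGraph V where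
  Adj x y := H.Adj x y ∧ x ≠ v ∧ y ≠ v
  symm := ⟨fun x y ⟨h, hx, hy⟩ => ⟨h.symm, hy, hx⟩⟩
  loopless := ⟨fun x h => H.irrefl h.1⟩

/-- Sequences of Kempe steps of a given length. -/
inductive KSeq (H : SimpleGraph V) (k : ℕ) : ℕ → (V → Fin k) → (V → Fin k) → Prop
  | refl (φ : V → Fin k) : KSeq H k 0 φ φ
  | tail {m : ℕ} {φ ψ χ : V → Fin k} :
      KSeq H k m φ ψ → KempeStep H k ψ χ → KSeq H k (m + 1) φ χ

lemma KSeq.trans {H : SimpleGraph V} {m n : ℕ} {φ ψ χ : V → Fin k}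
    (h1 : KSeq H k m φ ψ) (h2 : KSeq H k n ψ χ) : KSeq H k (m + n) φ χ := by
  induction h2 with
  | refl _ => exact h1
  | tail h hs ih => exact KSeq.tail (ih h1) hs

lemma walk_colors {G : SimpleGraph V} {φ : V → Fin k} {a b : Fin k} :
    ∀ {x y : V}, (kempeSub G φ a b).Walk x y → (φ x = a ∨ φ x = b) → (φ y = a ∨ φ y = b)
  | _, _, SimpleGraph.Walk.nil, h => h
  | _, _, SimpleGraph.Walk.cons had p, _ => walk_colors p had.2.2

lemma reach_colors {G : SimpleGraph V} {φ : V → Fin k} {a b : Fin k} {x y : V}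
    (h : (kempeSub G φ a b).Reachable x y) (hx : φ x = a ∨ φ x = b) :
    φ y = a ∨ φ y = b := by
  obtain ⟨p⟩ := h; exact walk_colors p hx

lemma reach_isolated {G : SimpleGraph V} {v : V} (h : ∀ y, ¬ G.Adj v y) {x : V}
    (r : G.Reachable v x) : x = v := by
  obtain ⟨p⟩ := r
  cases p with
  | nil => rfl
  | cons had _ => exact absurd had (h _)

lemma KempeStepAB.proper {G : SimpleGraph V} {a b : Fin k} {φ ψ : V → Fin k}
    (hφ : IsProperColoring G k φ) (h : KempeStepAB G a b φ ψ) :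
    IsProperColoring G k ψ := by
  obtain ⟨hab, u, hu, hin, hout⟩ := h
  intro x y hxy
  by_cases rx : (kempeSub G φ a b).Reachable u x <;>
    by_cases ry : (kempeSub G φ a b).Reachable u y
  · rw [hin x rx, hin y ry]
    exact fun e => hφ hxy (Equiv.injective _ e)
  · rw [hin x rx, hout y ry]
    have hcx : φ x = a ∨ φ x = b := reach_colors rx hu
    have hcy : ¬ (φ y = a ∨ φ y = b) := fun hcy =>
      ry (rx.trans (SimpleGraph.Adj.reachable ⟨hxy, hcx, hcy⟩))
    rcases hcx with e | e <;> rw [e]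
    · rw [Equiv.swap_apply_left]; exact fun e2 => hcy (Or.inr e2.symm)
    · rw [Equiv.swap_apply_right]; exact fun e2 => hcy (Or.inl e2.symm)
  · rw [hout x rx, hin y ry]
    have hcy : φ y = a ∨ φ y = b := reach_colors ry hu
    have hcx : ¬ (φ x = a ∨ φ x = b) := fun hcx =>
      rx (ry.trans (SimpleGraph.Adj.reachable ⟨hxy.symm, hcy, hcx⟩))
    rcases hcy with e | e <;> rw [e]
    · rw [Equiv.swap_apply_left]; exact fun e2 => hcx (Or.inr e2)
    · rw [Equiv.swap_apply_right]; exact fun e2 => hcx (Or.inl e2)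
  · rw [hout x rx, hout y ry]; exact hφ hxy

lemma singleton_step [DecidableEq V] {G : SimpleGraph V} {φ : V → Fin k} {v : V} {c : Fin k}
    (hne : φ v ≠ c) (hfree : ∀ y, G.Adj v y → φ y ≠ c) (hφ : IsProperColoring G k φ) :
    KempeStepAB G (φ v) c φ (Function.update φ v c) := by
  have hiso : ∀ y, ¬ (kempeSub G φ (φ v) c).Adj v y := by
    rintro y ⟨hadj, -, hy | hy⟩
    · exact hφ hadj hy.symm
    · exact hfree y hadj hy
  refine ⟨hne, v, Or.inl rfl, ?_, ?_⟩
  · intro u hu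
    have he : u = v := reach_isolated hiso hu
    subst he
    rw [Function.update_self, Equiv.swap_apply_left]
  · intro u hu
    have he : u ≠ v := fun e => hu (by rw [e])
    rw [Function.update_of_ne he]

lemma walk_transfer {G₁ G₂ : SimpleGraph V} {v w : V}
    (hdown : ∀ x y, G₂.Adj x y → x ≠ v → y ≠ v → G₁.Adj x y)
    (hw : ∀ y, G₂.Adj v y → y = w) :
    ∀ (n : ℕ) {x y : V}, x ≠ v → y ≠ v → ∀ p : G₂.Walk x y, p.length ≤ n →
      G₁.Reachable x y := by
  intro n
  induction n with
  | zero =>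
    intro x y hx hy p hp
    cases p with
    | nil => exact SimpleGraph.Reachable.refl x
    | cons had q => simp [SimpleGraph.Walk.length_cons] at hp
  | succ n ih =>
    intro x y hx hy p hp
    cases p with
    | nil => exact SimpleGraph.Reachable.refl x
    | @cons _ z _ had q =>
      by_cases hz : z = v
      · have hxw : x = w := hw x (by rw [← hz]; exact had.symm)
        cases q with
        | nil => exact absurd hz hy
        | @cons _ z' _ had' q' =>
          have had2' : G₂.Adj v z' := by rw [← hz]; exact had'
          have hz'w : z' = w := hw z' had2'
          have hz'v : z' ≠ v := (had2'.ne).symm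
          have hlen : q'.length ≤ n := by
            simp only [SimpleGraph.Walk.length_cons] at hp; omega
          have hr : G₁.Reachable z' y := ih hz'v hy q' hlen
          rw [hxw, ← hz'w]; exact hr
      · have hadj1 : G₁.Adj x z := hdown _ _ had hx hz
        have hlen : q.length ≤ n := by
          simp only [SimpleGraph.Walk.length_cons] at hp; omega
        exact hadj1.reachable.trans (ih hz hy q hlen)


lemma reach_mono' {G₁ G₂ : SimpleGraph V} (hle : ∀ x y, G₁.Adj x y → G₂.Adj x y)
    {x y : V} (h : G₁.Reachable x y) : G₂.Reachable x y :=
  SimpleGraph.Reachable.mono (fun _ _ h => hle _ _ h) h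

lemma lift_one {H : SimpleGraph V} {v u : V} {a b : Fin k} {σ σ₂ τ : V → Fin k}
    (hab : a ≠ b) (huv : u ≠ v)
    (hagree : ∀ x, x ≠ v → τ x = σ x)
    (hu : σ u = a ∨ σ u = b)
    (hin : ∀ x, (kempeSub (delVert H v) σ a b).Reachable u x →
      σ₂ x = Equiv.swap a b (σ x))
    (hout : ∀ x, ¬ (kempeSub (delVert H v) σ a b).Reachable u x → σ₂ x = σ x)
    (hiso : ∀ y, ¬ (kempeSub H τ a b).Adj v y) :
    ∃ τ₂, KempeStepAB H a b τ τ₂ ∧ ∀ x, x ≠ v → τ₂ x = σ₂ x := by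
  classical
  have hEq : kempeSub H τ a b = kempeSub (delVert H v) σ a b := by
    ext x y
    constructor
    · rintro ⟨hadj, hx, hy⟩
      have hxv : x ≠ v := by rintro rfl; exact hiso y ⟨hadj, hx, hy⟩
      have hyv : y ≠ v := by rintro rfl; exact hiso x ⟨hadj.symm, hy, hx⟩
      exact ⟨⟨hadj, hxv, hyv⟩, by rw [← hagree x hxv]; exact hx,
        by rw [← hagree y hyv]; exact hy⟩
    · rintro ⟨⟨hadj, hx, hy⟩, ha, hb⟩
      exact ⟨hadj, by rw [hagree x hx]; exact ha, by rw [hagree y hy]; exact hb⟩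
  refine ⟨fun x => if (kempeSub H τ a b).Reachable u x then Equiv.swap a b (τ x) else τ x,
    ⟨hab, u, by rw [hagree u huv]; exact hu, ?_, ?_⟩, ?_⟩
  · intro x hx; simp only [if_pos hx]
  · intro x hx; simp only [if_neg hx]
  · intro x hxv
    by_cases hr : (kempeSub H τ a b).Reachable u x
    · simp only [if_pos hr]
      rw [hagree x hxv, hin x (hEq ▸ hr)]
    · simp only [if_neg hr]
      rw [hagree x hxv, hout x (fun r => hr (hEq ▸ r))]

lemma lift_step [Fintype V] {H : SimpleGraph V} {v : V} {d : ℕ} (hdk : d < k)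
    (hdeg : {u | H.Adj v u}.ncard ≤ d)
    {σ σ₂ τ : V → Fin k} {a b : Fin k}
    (hτ : IsProperColoring H k τ)
    (hagree : ∀ x, x ≠ v → τ x = σ x)
    (hstep : KempeStepAB (delVert H v) a b σ σ₂) :
    ∃ τ₂ m, m ≤ 2 ∧ KSeq H k m τ τ₂ ∧ IsProperColoring H k τ₂ ∧
      ∀ x, x ≠ v → τ₂ x = σ₂ x := by
  classical
  obtain ⟨hab, u, hu, hin, hout⟩ := hstep
  by_cases huv : u = v
  · -- the chain is just {v} : nothing changes off v
    subst huv
    have hiso' : ∀ y, ¬ (kempeSub (delVert H u) σ a b).Adj u y := by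
      rintro y ⟨⟨-, hv, -⟩, -, -⟩; exact hv rfl
    refine ⟨τ, 0, by norm_num, KSeq.refl τ, hτ, ?_⟩
    intro x hx
    rw [hout x (fun r => hx (reach_isolated hiso' r)), hagree x hx]
  · by_cases hcv : τ v = a ∨ τ v = b
    · by_cases hfree : ∃ c, c ≠ a ∧ c ≠ b ∧ ∀ y, H.Adj v y → τ y ≠ c
      · -- recolor v out of {a,b} first, then do the chain
        obtain ⟨c, hca, hcb, hcfree⟩ := hfree
        have hvc : τ v ≠ c := by
          rcases hcv with e | e
          · exact fun h => hca (by rw [← h, e])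
          · exact fun h => hcb (by rw [← h, e])
        have step1 := singleton_step hvc hcfree hτ
        set τ' := Function.update τ v c with hτ'def
        have hτ' : IsProperColoring H k τ' := KempeStepAB.proper hτ step1
        have hagree' : ∀ x, x ≠ v → τ' x = σ x := fun x hx => by
          rw [hτ'def, Function.update_of_ne hx]; exact hagree x hx
        have hiso : ∀ y, ¬ (kempeSub H τ' a b).Adj v y := by
          rintro y ⟨-, hv', -⟩
          have hcv' : τ' v = c := by rw [hτ'def, Function.update_self]
          rcases hv' with e | e
          · exact hca (by rw [← e, hcv'])
          · exact hcb (by rw [← e, hcv'])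
        obtain ⟨τ₂, step2, hag₂⟩ := lift_one hab huv hagree' hu hin hout hiso
        exact ⟨τ₂, 2, le_refl 2,
          KSeq.tail (KSeq.tail (KSeq.refl τ) ⟨_, _, step1⟩) ⟨a, b, step2⟩,
          KempeStepAB.proper hτ' step2, hag₂⟩
      · by_cases hbn : ∃ w, H.Adj v w ∧ (τ w = a ∨ τ w = b)
        · -- v has a unique Kempe neighbor w; do the chain in H directly
          obtain ⟨w, hvw, hwc⟩ := hbn
          push_neg at hfree
          -- uniqueness of the kempe neighbor
          have huniq : ∀ y, (kempeSub H τ a b).Adj v y → y = w := by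
            rintro y ⟨hadj, -, hyc⟩
            have hcy : τ y ≠ τ v := fun e => hτ hadj e.symm
            have hcw : τ w ≠ τ v := fun e => hτ hvw e.symm
            have heq : τ y = τ w := by
              rcases hcv with e | e
              · rcases hyc with e1 | e1
                · exact absurd (e1.trans e.symm) hcy
                · rcases hwc with e2 | e2
                  · exact absurd (e2.trans e.symm) hcw
                  · rw [e1, e2]
              · rcases hyc with e1 | e1
                · rcases hwc with e2 | e2
                  · rw [e1, e2]
                  · exact absurd (e2.trans e.symm) hcw
                · exact absurd (e1.trans e.symm) hcy
            -- injectivity of τ on the neighborhood of v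
            set N : Finset V := (Set.toFinite {u | H.Adj v u}).toFinset with hN
            have hyN : y ∈ N := by rw [hN, Set.Finite.mem_toFinset]; exact hadj
            have hwN : w ∈ N := by rw [hN, Set.Finite.mem_toFinset]; exact hvw
            have hNcard : N.card ≤ d := by
              rw [hN, ← Set.ncard_eq_toFinset_card]; exact hdeg
            have hsub : (Finset.univ \ {a, b} : Finset (Fin k)) ∪ {τ w} ⊆ N.image τ := by
              intro c hc
              rcases Finset.mem_union.mp hc with hc | hc
              · rw [Finset.mem_sdiff, Finset.mem_insert, Finset.mem_singleton] at hc
                push_neg at hc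
                obtain ⟨z, hz1, hz2⟩ := hfree c hc.2.1 hc.2.2
                exact Finset.mem_image.mpr ⟨z, by rw [hN, Set.Finite.mem_toFinset]; exact hz1, hz2⟩
              · rw [Finset.mem_singleton] at hc
                exact hc ▸ Finset.mem_image.mpr ⟨w, hwN, rfl⟩
            have hwnotin : τ w ∉ (Finset.univ \ {a, b} : Finset (Fin k)) := by
              rw [Finset.mem_sdiff]
              rintro ⟨-, h2⟩
              rcases hwc with e | e <;> rw [e] at h2 <;> simp at h2
            have hcard1 : k - 1 ≤ (N.image τ).card := by
              have h1 : ((Finset.univ \ {a, b} : Finset (Fin k)) ∪ {τ w}).card = k - 1 := by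
                rw [Finset.card_union_of_disjoint
                    (Finset.disjoint_singleton_right.mpr hwnotin),
                  Finset.card_sdiff_of_subset (Finset.subset_univ _), Finset.card_univ,
                  Fintype.card_fin, Finset.card_pair hab, Finset.card_singleton]
                have hk1 : 1 ≤ k := (a : Fin k).pos
                omega
              calc k - 1 = _ := h1.symm
                _ ≤ (N.image τ).card := Finset.card_le_card hsub
            have hinj : Set.InjOn τ ↑N := by
              apply Finset.card_image_iff.mp
              have := Finset.card_image_le (s := N) (f := τ)
              omega
            exact hinj hyN hwN heq
          -- transfer reachability between H and delVert H v
          have hdown : ∀ x y, (kempeSub H τ a b).Adj x y → x ≠ v → y ≠ v →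
              (kempeSub (delVert H v) σ a b).Adj x y := by
            rintro x y ⟨hadj, hx, hy⟩ hxv hyv
            exact ⟨⟨hadj, hxv, hyv⟩, by rw [← hagree x hxv]; exact hx,
              by rw [← hagree y hyv]; exact hy⟩
          have hle : ∀ x y, (kempeSub (delVert H v) σ a b).Adj x y →
              (kempeSub H τ a b).Adj x y := by
            rintro x y ⟨⟨hadj, hx, hy⟩, ha, hb⟩
            exact ⟨hadj, by rw [hagree x hx]; exact ha, by rw [hagree y hy]; exact hb⟩
          refine ⟨fun x => if (kempeSub H τ a b).Reachable u x then Equiv.swap a b (τ x)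
              else τ x, 1, by norm_num, ?_, ?_, ?_⟩
          · refine KSeq.tail (KSeq.refl τ) ⟨a, b, hab, u, by rw [hagree u huv]; exact hu, ?_, ?_⟩
            · intro x hx; simp only [if_pos hx]
            · intro x hx; simp only [if_neg hx]
          · exact KempeStepAB.proper hτ ⟨hab, u, by rw [hagree u huv]; exact hu,
              fun x hx => by simp only [if_pos hx], fun x hx => by simp only [if_neg hx]⟩
          · intro x hxv
            by_cases hr : (kempeSub H τ a b).Reachable u x
            · simp only [if_pos hr]
              rw [hagree x hxv, hin x ?_]
              obtain ⟨p⟩ := hr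
              exact walk_transfer hdown huniq p.length huv hxv p le_rfl
            · simp only [if_neg hr]
              rw [hagree x hxv, hout x (fun r => hr (reach_mono' hle r))]
        · -- v is isolated in the kempe subgraph
          push_neg at hbn
          have hiso : ∀ y, ¬ (kempeSub H τ a b).Adj v y := by
            rintro y ⟨hadj, -, hy | hy⟩
            · exact (hbn y hadj).1 hy
            · exact (hbn y hadj).2 hy
          obtain ⟨τ₂, step, hag⟩ := lift_one hab huv hagree hu hin hout hiso
          exact ⟨τ₂, 1, by norm_num, KSeq.tail (KSeq.refl τ) ⟨a, b, step⟩,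
            KempeStepAB.proper hτ step, hag⟩
    · -- τ v ∉ {a, b} : v is isolated in the kempe subgraph
      have hiso : ∀ y, ¬ (kempeSub H τ a b).Adj v y := by
        rintro y ⟨-, hv', -⟩; exact hcv hv'
      obtain ⟨τ₂, step, hag⟩ := lift_one hab huv hagree hu hin hout hiso
      exact ⟨τ₂, 1, by norm_num, KSeq.tail (KSeq.refl τ) ⟨a, b, step⟩,
        KempeStepAB.proper hτ step, hag⟩


lemma main_induction {V : Type} [Fintype V] {d k : ℕ} (hdk : d < k) :
    ∀ (n : ℕ) (S : Finset V) (H : SimpleGraph V), S.card = n →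
      (∀ x y, H.Adj x y → x ∈ S) → Degenerate d H →
      ∀ α β : V → Fin k, IsProperColoring H k α → IsProperColoring H k β →
        (∀ x, x ∉ S → α x = β x) →
        ∃ m, m ≤ 2 ^ n - 1 ∧ KSeq H k m α β := by
  classical
  intro n
  induction n with
  | zero =>
    intro S H hcard hsupp hdegen α β hα hβ hagree
    have hS : S = ∅ := Finset.card_eq_zero.mp hcard
    have hab : α = β := funext fun x => hagree x (by simp [hS])
    exact ⟨0, by norm_num, hab ▸ KSeq.refl α⟩
  | succ n ih =>
    intro S H hcard hsupp hdegen α β hα hβ hagree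
    have hSne : S.Nonempty := Finset.card_pos.mp (by omega)
    obtain ⟨v, hvS, hvdeg⟩ := hdegen ↑S S.finite_toSet (by exact_mod_cast hSne)
    have hvdeg' : {u | H.Adj v u}.ncard ≤ d := by
      have hNv : {u | H.Adj v u} = {u ∈ (↑S : Set V) | H.Adj v u} := by
        ext u
        simp only [Set.mem_setOf_eq, Set.mem_sep_iff, Finset.coe_mem, Finset.mem_coe]
        exact ⟨fun h => ⟨hsupp u v h.symm, h⟩, fun h => h.2⟩
      rw [hNv]; exact hvdeg
    set H' := delVert H v with hH'
    have hsupp' : ∀ x y, H'.Adj x y → x ∈ S.erase v := fun x y ⟨h, hx, _⟩ =>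
      Finset.mem_erase.mpr ⟨hx, hsupp x y h⟩
    have hdeg' : Degenerate d H' := by
      intro T hT hTne
      obtain ⟨z, hzT, hz⟩ := hdegen T hT hTne
      refine ⟨z, hzT, le_trans (Set.ncard_le_ncard ?_ (hT.subset (Set.sep_subset _ _))) hz⟩
      rintro x ⟨hx1, hx2⟩
      exact ⟨hx1, hx2.1⟩
    set β₀ := Function.update β v (α v) with hβ₀def
    have hβ₀ : IsProperColoring H' k β₀ := by
      rintro x y ⟨hxy, hx, hy⟩
      rw [hβ₀def, Function.update_of_ne hx, Function.update_of_ne hy]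
      exact hβ hxy
    have hα' : IsProperColoring H' k α := fun x y h => hα h.1
    have hagree' : ∀ x, x ∉ S.erase v → α x = β₀ x := by
      intro x hx
      by_cases hxv : x = v
      · rw [hxv, hβ₀def, Function.update_self]
      · have hxS : x ∉ S := by
          intro hxS
          exact hx (Finset.mem_erase.mpr ⟨hxv, hxS⟩)
        rw [hβ₀def, Function.update_of_ne hxv]
        exact hagree x hxS
    have hcard' : (S.erase v).card = n := by
      rw [Finset.card_erase_of_mem hvS]; omega
    obtain ⟨m, hm, hseq⟩ := ih (S.erase v) H' hcard' hsupp' hdeg' α β₀ hα' hβ₀ hagree'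
    -- lift the H'-sequence to an H-sequence
    have lift : ∀ (m : ℕ) (φ ψ : V → Fin k), KSeq H' k m φ ψ →
        ∀ τ, IsProperColoring H k τ → (∀ x, x ≠ v → τ x = φ x) →
        ∃ m' τ₂, m' ≤ 2 * m ∧ KSeq H k m' τ τ₂ ∧ IsProperColoring H k τ₂ ∧
          ∀ x, x ≠ v → τ₂ x = ψ x := by
      intro m φ ψ hseq
      induction hseq with
      | refl φ =>
        intro τ hτ hag
        exact ⟨0, τ, by omega, KSeq.refl τ, hτ, hag⟩
      | @tail m₀ φ₀ ψ₀ χ₀ hks hstep ih' =>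
        intro τ hτ hag
        obtain ⟨m₁, τ₁, hm₁, hseq₁, hτ₁, hag₁⟩ := ih' τ hτ hag
        obtain ⟨a, b, hab⟩ := hstep
        obtain ⟨τ₂, m₂, hm₂, hseq₂, hτ₂, hag₂⟩ := lift_step hdk hvdeg' hτ₁ hag₁ hab
        exact ⟨m₁ + m₂, τ₂, by omega, hseq₁.trans hseq₂, hτ₂, hag₂⟩
    obtain ⟨m', τ, hm', hseqH, hτp, hagτ⟩ := lift m α β₀ hseq α hα (fun _ _ => rfl)
    have hpow : (1:ℕ) ≤ 2 ^ n := Nat.one_le_two_pow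
    have hpow2 : 2 ^ (n + 1) = 2 * 2 ^ n := by ring
    by_cases hfin : τ v = β v
    · have hτβ : τ = β := funext fun x => by
        by_cases hxv : x = v
        · rw [hxv]; exact hfin
        · rw [hagτ x hxv, hβ₀def, Function.update_of_ne hxv]
      exact ⟨m', by omega, hτβ ▸ hseqH⟩
    · have hfree : ∀ y, H.Adj v y → τ y ≠ β v := by
        intro y hy
        rw [hagτ y hy.ne', hβ₀def, Function.update_of_ne hy.ne']
        exact fun e => hβ hy.symm e
      have step := singleton_step hfin hfree hτp
      have hupd : Function.update τ v (β v) = β := funext fun x => by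
        by_cases hxv : x = v
        · rw [hxv, Function.update_self]
        · rw [Function.update_of_ne hxv, hagτ x hxv, hβ₀def,
            Function.update_of_ne hxv]
      exact ⟨m' + 1, by omega, KSeq.tail hseqH ⟨_, _, hupd ▸ step⟩⟩

lemma KSeq.toSeq {V : Type*} {k : ℕ} {H : SimpleGraph V} {m : ℕ} {α β : V → Fin k}
    (h : KSeq H k m α β) :
    ∃ σ : ℕ → V → Fin k, σ 0 = α ∧ σ m = β ∧
      (∀ i < m, KempeStep H k (σ i) (σ (i + 1))) := by
  induction h with
  | refl φ => exact ⟨fun _ => φ, rfl, rfl, fun i hi => absurd hi (Nat.not_lt_zero i)⟩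
  | @tail m₀ φ₀ ψ₀ χ₀ hks hstep ih =>
    obtain ⟨σ, h0, hm, hsteps⟩ := ih
    refine ⟨fun i => if i ≤ m₀ then σ i else χ₀, ?_, ?_, ?_⟩
    · simp only [if_pos (Nat.zero_le m₀)]; exact h0
    · simp only [if_neg (by omega : ¬ m₀ + 1 ≤ m₀)]
    · intro i hi
      by_cases him : i < m₀
      · simp only [if_pos (by omega : i ≤ m₀), if_pos (by omega : i + 1 ≤ m₀)]
        exact hsteps i him
      · have hieq : i = m₀ := by omega
        simp only [hieq, if_pos (le_refl m₀), if_neg (by omega : ¬ m₀ + 1 ≤ m₀), hm]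
        exact hstep

end Aux

/-- For all `d ≥ 2` and `k > d` there is a constant `C = C(d, k)` such
that for every finite `d`-degenerate graph `G` on `n` vertices, any two proper
`k`-colorings of `G` are joined by a sequence of at most `C * d ^ n` Kempe changes. -/
theorem kempe_diameter_exponential (d k : ℕ) (hd : 2 ≤ d) (hk : d < k) :
    ∃ C : ℕ, ∀ (V : Type) [Fintype V], ∀ G : SimpleGraph V, Degenerate d G →
      ∀ α β : V → Fin k, IsProperColoring G k α → IsProperColoring G k β →
        ∃ (m : ℕ) (σ : ℕ → V → Fin k), m ≤ C * d ^ (Fintype.card V) ∧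
          σ 0 = α ∧ σ m = β ∧
          (∀ i ≤ m, IsProperColoring G k (σ i)) ∧
          (∀ i < m, KempeStep G k (σ i) (σ (i + 1))) := by
  refine ⟨1, ?_⟩
  intro V _ G hdeg α β hα hβ
  classical
  obtain ⟨m, hm, hseq⟩ := main_induction hk (Fintype.card V) Finset.univ G
    (by simp) (fun x y _ => Finset.mem_univ x) hdeg α β hα hβ
    (fun x hx => absurd (Finset.mem_univ x) hx)
  obtain ⟨σ, h0, hmσ, hsteps⟩ := hseq.toSeq
  have hbound : m ≤ 1 * d ^ (Fintype.card V) := by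
    have h2d : 2 ^ (Fintype.card V) ≤ d ^ (Fintype.card V) :=
      Nat.pow_le_pow_left hd _
    omega
  have hproper : ∀ i ≤ m, IsProperColoring G k (σ i) := by
    intro i
    induction i with
    | zero => intro _; rw [h0]; exact hα
    | succ i ihp =>
      intro hi
      obtain ⟨a, b, hab⟩ := hsteps i (by omega)
      exact KempeStepAB.proper (ihp (by omega)) hab
  exact ⟨m, σ, hbound, h0, hmσ, hproper, hsteps⟩
end

section
/- Let G be a finite simple graph, let u and w be distinct nonadjacent vertices of G, let G' be the graph obtained from G by identifying u and w into a single vertex, and let φ be a proper k-coloring of G with φ(u) = φ(w), inducing the proper k-coloring φ' of G'. Then every sequence of m Kempe changes in G' transforming φ' into a proper k-coloring ψ' lifts to a sequence of Kempe changes in G transforming φ into the lifted coloring ψ (defined by ψ(x) = ψ'(image of x)); moreover, in this lifted sequence each vertex of G changes its color exactly as many times as its image in G' does. -/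
/-- The number of indices `i < m` at which the vertex `x` changes its color in the
sequence of colorings `σ 0, σ 1, …, σ m`. -/
def changeCount {W : Type*} {k : ℕ} (m : ℕ) (σ : ℕ → W → Fin k) (x : W) : ℕ :=
  ((Finset.range m).filter fun i => σ i x ≠ σ (i + 1) x).card

/-- The map sending `x` to `u` if `x = w`, and to itself otherwise. -/
def mergeMap {V : Type*} [DecidableEq V] (u w : V) (x : V) : V := if x = w then u else x

/-- The graph obtained from `G` by identifying the vertices `u` and `w` into the single
vertex `u`: two (distinct) vertices are adjacent iff some pair of their preimages under
`mergeMap u w` is adjacent in `G`.  (The vertex `w` is left isolated; the identified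
graph `G'` proper is the induced subgraph on `{y | y ≠ w}`.) -/
def mergeGraph {V : Type*} [DecidableEq V] (G : SimpleGraph V) (u w : V) :
    SimpleGraph V where
  Adj a b := a ≠ b ∧ ∃ x y, G.Adj x y ∧ mergeMap u w x = a ∧ mergeMap u w y = b
  symm := ⟨fun a b ⟨hab, x, y, h, hx, hy⟩ => ⟨hab.symm, y, x, h.symm, hy, hx⟩⟩
  loopless := ⟨fun a h => h.1 rfl⟩

/-- The quotient map from `V(G)` to the vertex set of the identified graph. -/
def mergeTo {V : Type*} [DecidableEq V] (u w : V) (huw : u ≠ w) (x : V) :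
    ↥{y : V | y ≠ w} :=
  if h : x = w then ⟨u, huw⟩ else ⟨x, h⟩

lemma changeCount_succ {W : Type*} {k : ℕ} (m : ℕ) (σ : ℕ → W → Fin k) (x : W) :
    changeCount (m + 1) σ x
      = changeCount m σ x + (if σ m x = σ (m + 1) x then 0 else 1) := by
  unfold changeCount
  rw [Finset.range_add_one, Finset.filter_insert]
  by_cases h : σ m x = σ (m + 1) x
  · rw [if_neg (not_not_intro h), if_pos h, Nat.add_zero]
  · rw [if_pos h, if_neg h, Finset.card_insert_of_notMem (by simp)]

lemma changeCount_one {W : Type*} {k : ℕ} (σ : ℕ → W → Fin k) (x : W) :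
    changeCount 1 σ x = if σ 0 x = σ 1 x then 0 else 1 := by
  have h := changeCount_succ 0 σ x
  simpa [changeCount] using h

lemma changeCount_two {W : Type*} {k : ℕ} (σ : ℕ → W → Fin k) (x : W) :
    changeCount 2 σ x
      = (if σ 0 x = σ 1 x then 0 else 1) + (if σ 1 x = σ 2 x then 0 else 1) := by
  have h := changeCount_succ 1 σ x
  rw [changeCount_one] at h
  exact h

lemma changeCount_add {W : Type*} {k : ℕ} (p : ℕ) (σ : ℕ → W → Fin k) (x : W) (n : ℕ) :
    changeCount (p + n) σ x
      = changeCount p σ x + changeCount n (fun j => σ (p + j)) x := by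
  induction n with
  | zero => simp [changeCount]
  | succ n ih =>
      have h1 : p + (n + 1) = (p + n) + 1 := rfl
      rw [h1, changeCount_succ, ih, changeCount_succ n (fun j => σ (p + j)) x]
      show _ = _ + (changeCount n _ x + _)
      simp only [← Nat.add_assoc]

lemma changeCount_congr {W : Type*} {k : ℕ} (m : ℕ) (σ ρ : ℕ → W → Fin k) (x : W)
    (h : ∀ i ≤ m, σ i x = ρ i x) :
    changeCount m σ x = changeCount m ρ x := by
  unfold changeCount
  congr 1
  apply Finset.filter_congr
  intro i hi
  rw [Finset.mem_range] at hi
  simp [h i hi.le, h (i + 1) hi]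


-- ### auxiliary lemmas

/-- The lift of a coloring of the merged graph to the original graph. -/
def liftC {V : Type*} [DecidableEq V] {k : ℕ} (u w : V) (huw : u ≠ w)
    (τ : ↥{y : V | y ≠ w} → Fin k) : V → Fin k := fun x => τ (mergeTo u w huw x)

section MergeLemmas

variable {V : Type*} [DecidableEq V] {u w : V} (huw : u ≠ w)

lemma mergeTo_val (x : V) : (mergeTo u w huw x).val = mergeMap u w x := by
  unfold mergeTo mergeMap
  split <;> rfl

lemma mergeTo_coe (s : ↥{y : V | y ≠ w}) : mergeTo u w huw s.val = s := by
  unfold mergeTo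
  exact Subtype.ext (by rw [dif_neg s.property])

lemma mergeTo_w : mergeTo u w huw w = ⟨u, huw⟩ := dif_pos rfl

lemma mergeTo_u : mergeTo u w huw u = ⟨u, huw⟩ := by
  unfold mergeTo; rw [dif_neg huw]

lemma mergeTo_eq_cases {x y : V} (h : mergeTo u w huw x = mergeTo u w huw y) :
    x = y ∨ (x = u ∧ y = w) ∨ (x = w ∧ y = u) := by
  unfold mergeTo at h
  by_cases hx : x = w <;> by_cases hy : y = w <;>
    simp [hx, hy, Subtype.ext_iff] at h ⊢ <;> tauto

end MergeLemmas

section StepLift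

variable {V : Type*} [DecidableEq V] {G : SimpleGraph V} {k : ℕ} {u w : V}

lemma step_lift (huw : u ≠ w) (hnadj : ¬ G.Adj u w)
    (τ τ' : ↥{y : V | y ≠ w} → Fin k)
    (h : KempeStep ((mergeGraph G u w).induce {y : V | y ≠ w}) k τ τ') :
    ∃ n, 1 ≤ n ∧ ∃ ρ : ℕ → V → Fin k,
      ρ 0 = liftC u w huw τ ∧
      ρ n = liftC u w huw τ' ∧
      (∀ i < n, KempeStep G k (ρ i) (ρ (i + 1))) ∧
      (∀ x : V, changeCount n ρ x = if ρ 0 x = ρ n x then 0 else 1) := by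
  classical
  obtain ⟨a, b, hab, v', hv'c, hswap, hkeep⟩ := h
  set q : V → ↥{y : V | y ≠ w} := mergeTo u w huw with hq
  set K : SimpleGraph V := kempeSub G (liftC u w huw τ) a b with hK
  set K' : SimpleGraph ↥{y : V | y ≠ w} :=
    kempeSub ((mergeGraph G u w).induce {y : V | y ≠ w}) τ a b with hK'
  have hLt : ∀ x, liftC u w huw τ x = τ (q x) := fun _ => rfl
  -- pushing edges down to the merged graph
  have push : ∀ x y : V, K.Adj x y → K'.Adj (q x) (q y) := by
    rintro x y ⟨hxy, hx, hy⟩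
    refine ⟨⟨?_, x, y, hxy, (mergeTo_val huw x).symm, (mergeTo_val huw y).symm⟩, hx, hy⟩
    intro hv
    have : q x = q y := Subtype.ext hv
    rcases mergeTo_eq_cases huw this with h1 | ⟨h1, h2⟩ | ⟨h1, h2⟩
    · exact G.irrefl (h1 ▸ hxy)
    · exact hnadj (h1 ▸ h2 ▸ hxy)
    · exact hnadj (h1 ▸ h2 ▸ hxy).symm
  have pushR : ∀ x y : V, K.Reachable x y → K'.Reachable (q x) (q y) := by
    intro x y hr
    obtain ⟨p⟩ := hr
    induction p with
    | nil => exact SimpleGraph.Reachable.refl _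
    | cons h p ih => exact ((push _ _ h).reachable).trans ih
  -- lifting edges
  have lift : ∀ s t, K'.Adj s t → ∃ x y, K.Adj x y ∧ q x = s ∧ q y = t := by
    rintro s t ⟨⟨hne, x, y, hxy, hx, hy⟩, hs, ht⟩
    have hqx : q x = s := Subtype.ext (by rw [mergeTo_val huw]; exact hx)
    have hqy : q y = t := Subtype.ext (by rw [mergeTo_val huw]; exact hy)
    refine ⟨x, y, ⟨hxy, ?_, ?_⟩, hqx, hqy⟩
    · rw [hLt, hqx]; exact hs
    · rw [hLt, hqy]; exact ht
  -- lifting walks, up to the possible jump between `u` and `w`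
  have liftR : ∀ s t, K'.Reachable s t → ∀ y, q y = t →
      ∃ x, q x = s ∧ (K.Reachable x y ∨ (K.Reachable x u ∧ K.Reachable w y) ∨
        (K.Reachable x w ∧ K.Reachable u y)) := by
    intro s t hr
    obtain ⟨p⟩ := hr
    induction p with
    | nil => exact fun y hy => ⟨y, hy, Or.inl (SimpleGraph.Reachable.refl y)⟩
    | cons h p ih =>
        intro y hy
        obtain ⟨x₁, hx₁, hKR⟩ := ih y hy
        obtain ⟨x', y', hadj, hqx', hqy'⟩ := lift _ _ h
        have hqq : q y' = q x₁ := by rw [hqy', hx₁]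
        rcases mergeTo_eq_cases huw hqq with heq | ⟨h1, h2⟩ | ⟨h1, h2⟩
        · subst heq
          refine ⟨x', hqx', ?_⟩
          rcases hKR with h3 | ⟨h3, h4⟩ | ⟨h3, h4⟩
          · exact Or.inl (hadj.reachable.trans h3)
          · exact Or.inr (Or.inl ⟨hadj.reachable.trans h3, h4⟩)
          · exact Or.inr (Or.inr ⟨hadj.reachable.trans h3, h4⟩)
        · subst h1; subst h2
          refine ⟨x', hqx', ?_⟩
          rcases hKR with h3 | ⟨h3, h4⟩ | ⟨h3, h4⟩
          · exact Or.inr (Or.inl ⟨hadj.reachable, h3⟩)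
          · exact Or.inl (hadj.reachable.trans (h3.symm.trans h4))
          · exact Or.inl (hadj.reachable.trans h4)
        · subst h1; subst h2
          refine ⟨x', hqx', ?_⟩
          rcases hKR with h3 | ⟨h3, h4⟩ | ⟨h3, h4⟩
          · exact Or.inr (Or.inr ⟨hadj.reachable, h3⟩)
          · exact Or.inl (hadj.reachable.trans h4)
          · exact Or.inl (hadj.reachable.trans (h3.symm.trans h4))
  -- colors propagate along walks
  have colK' : ∀ s t, K'.Walk s t → (τ s = a ∨ τ s = b) → (τ t = a ∨ τ t = b) := by
    intro s t p
    induction p with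
    | nil => exact id
    | cons h _ ih => exact fun _ => ih h.2.2
  have colK : ∀ x y, K.Walk x y →
      (liftC u w huw τ x = a ∨ liftC u w huw τ x = b) →
      (liftC u w huw τ y = a ∨ liftC u w huw τ y = b) := by
    intro x y p
    induction p with
    | nil => exact id
    | cons h _ ih => exact fun _ => ih h.2.2
  obtain ⟨v0, hv0w⟩ := v'
  have hqv0 : q v0 = ⟨v0, hv0w⟩ := mergeTo_coe huw ⟨v0, hv0w⟩
  have hLv0 : liftC u w huw τ v0 = a ∨ liftC u w huw τ v0 = b := by
    rw [hLt, hqv0]; exact hv'c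
  have hpre : ∀ x, q x = ⟨v0, hv0w⟩ → x = v0 ∨ (v0 = u ∧ x = w) := by
    intro x hx
    rcases mergeTo_eq_cases huw (hx.trans hqv0.symm) with h1 | ⟨h1, h2⟩ | ⟨h1, h2⟩
    · exact Or.inl h1
    · exact absurd h2 hv0w
    · exact Or.inr ⟨h2, h1⟩
  have hsplitlem : ∀ x, K'.Reachable ⟨v0, hv0w⟩ (q x) → ¬ K.Reachable v0 x →
      (¬ K.Reachable v0 u ∧ K.Reachable u x) ∨ (¬ K.Reachable v0 w ∧ K.Reachable w x) := by
    intro x hrx hnx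
    obtain ⟨x', hqx', hKR⟩ := liftR _ _ hrx x rfl
    rcases hpre x' hqx' with rfl | ⟨hv0u, rfl⟩
    · rcases hKR with h3 | ⟨h3, h4⟩ | ⟨h3, h4⟩
      · exact absurd h3 hnx
      · exact Or.inr ⟨fun hc => hnx (hc.trans h4), h4⟩
      · exact Or.inl ⟨fun hc => hnx (hc.trans h4), h4⟩
    · rcases hKR with h3 | ⟨h3, h4⟩ | ⟨h3, h4⟩
      · exact Or.inr ⟨fun hc => hnx (hc.trans h3), h3⟩
      · exact absurd (show K.Reachable v0 x by rw [hv0u]; exact h3.symm.trans h4) hnx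
      · exact absurd (show K.Reachable v0 x by rw [hv0u]; exact h4) hnx
  have huworv : K'.Reachable ⟨v0, hv0w⟩ (⟨u, huw⟩ : ↥{y : V | y ≠ w}) →
      (K.Reachable v0 u ∨ K.Reachable v0 w) := by
    intro hr
    obtain ⟨x', hqx', hKR⟩ := liftR _ _ hr u (mergeTo_u huw)
    rcases hpre x' hqx' with rfl | ⟨hv0u, rfl⟩
    · rcases hKR with h3 | ⟨h3, h4⟩ | ⟨h3, h4⟩
      · exact Or.inl h3
      · exact Or.inl h3
      · exact Or.inr h3
    · exact Or.inl (by rw [hv0u])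
  have swap_mem : ∀ c : Fin k,
      (Equiv.swap a b c = a ∨ Equiv.swap a b c = b) ↔ (c = a ∨ c = b) := by
    intro c
    constructor
    · rintro (h | h)
      · right
        have := congrArg (Equiv.swap a b) h
        rwa [Equiv.swap_apply_self, Equiv.swap_apply_left] at this
      · left
        have := congrArg (Equiv.swap a b) h
        rwa [Equiv.swap_apply_self, Equiv.swap_apply_right] at this
    · rintro (h | h)
      · rw [h]; right; exact Equiv.swap_apply_left a b
      · rw [h]; left; exact Equiv.swap_apply_right a b
  have swap_ne : ∀ c : Fin k, (c = a ∨ c = b) → Equiv.swap a b c ≠ c := by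
    rintro c (h | h)
    · rw [h, Equiv.swap_apply_left]; exact fun h2 => hab h2.symm
    · rw [h, Equiv.swap_apply_right]; exact hab
  by_cases hall : ∀ x, K'.Reachable ⟨v0, hv0w⟩ (q x) → K.Reachable v0 x
  · -- the chain does not split: one Kempe change suffices
    set ρ : ℕ → V → Fin k :=
      fun i => if i = 0 then liftC u w huw τ else liftC u w huw τ' with hρ
    have hρ0 : ρ 0 = liftC u w huw τ := rfl
    have hρ1 : ρ 1 = liftC u w huw τ' := rfl
    refine ⟨1, le_refl 1, ρ, hρ0, hρ1, ?_, ?_⟩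
    · intro i hi
      have hi0 : i = 0 := by omega
      subst hi0
      show KempeStep G k (ρ 0) (ρ 1)
      rw [hρ0, hρ1]
      refine ⟨a, b, hab, v0, hLv0, ?_, ?_⟩
      · intro x hr
        exact hswap (q x) (by rw [← hqv0]; exact pushR v0 x hr)
      · intro x hr
        have hnr : ¬ K'.Reachable ⟨v0, hv0w⟩ (q x) := fun hc => hr (hall x hc)
        exact hkeep (q x) hnr
    · intro x
      rw [changeCount_one]
  · -- the chain splits into two chains of `G`: two Kempe changes
    push_neg at hall
    obtain ⟨x₀, hx₀C, hx₀n⟩ := hall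
    obtain ⟨z, hzuw, hz1, hz0⟩ :
        ∃ z, (z = u ∨ z = w) ∧ ¬ K.Reachable v0 z ∧ K.Reachable z x₀ := by
      rcases hsplitlem x₀ hx₀C hx₀n with ⟨hnu, hux⟩ | ⟨hnw, hwx⟩
      · exact ⟨u, Or.inl rfl, hnu, hux⟩
      · exact ⟨w, Or.inr rfl, hnw, hwx⟩
    have hqz : q z = ⟨u, huw⟩ := by
      rcases hzuw with rfl | rfl
      · exact mergeTo_u huw
      · exact mergeTo_w huw
    have hzC : K'.Reachable ⟨v0, hv0w⟩ (q z) := hx₀C.trans (pushR z x₀ hz0).symm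
    have huw' : K.Reachable v0 u ∨ K.Reachable v0 w := huworv (hqz ▸ hzC)
    have hz3 : ∀ x, K'.Reachable ⟨v0, hv0w⟩ (q x) → ¬ K.Reachable v0 x →
        K.Reachable z x := by
      intro x hrx hnx
      rcases hsplitlem x hrx hnx with ⟨hnu, hux⟩ | ⟨hnw, hwx⟩
      · rcases hzuw with rfl | rfl
        · exact hux
        · rcases huw' with hc | hc
          · exact absurd hc hnu
          · exact absurd hc hz1
      · rcases hzuw with rfl | rfl
        · rcases huw' with hc | hc
          · exact absurd hc hz1
          · exact absurd hc hnw
        · exact hwx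
    have hz4 : liftC u w huw τ z = a ∨ liftC u w huw τ z = b := by
      rw [hLt]
      obtain ⟨p⟩ := hzC
      exact colK' _ _ p hv'c
    have hdisj : ∀ x, K.Reachable v0 x → K.Reachable z x → False :=
      fun x h1 h2 => hz1 (h1.trans h2.symm)
    have hcomp0 : ∀ x, K.Reachable v0 x →
        (liftC u w huw τ x = a ∨ liftC u w huw τ x = b) := by
      intro x hr
      obtain ⟨p⟩ := hr
      exact colK _ _ p hLv0
    have hcompz : ∀ x, K.Reachable z x →
        (liftC u w huw τ x = a ∨ liftC u w huw τ x = b) := by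
      intro x hr
      obtain ⟨p⟩ := hr
      exact colK _ _ p hz4
    have hA : ∀ x, K.Reachable v0 x →
        liftC u w huw τ' x = Equiv.swap a b (liftC u w huw τ x) := by
      intro x hr
      exact hswap (q x) (by rw [← hqv0]; exact pushR v0 x hr)
    have hB : ∀ x, K.Reachable z x →
        liftC u w huw τ' x = Equiv.swap a b (liftC u w huw τ x) := by
      intro x hr
      exact hswap (q x) (hzC.trans (pushR z x hr))
    have hC : ∀ x, ¬ K.Reachable v0 x → ¬ K.Reachable z x →
        liftC u w huw τ' x = liftC u w huw τ x := by
      intro x h1 h2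
      exact hkeep (q x) (fun hr => h2 (hz3 x hr h1))
    set mid : V → Fin k :=
      fun x => if K.Reachable v0 x then Equiv.swap a b (liftC u w huw τ x)
        else liftC u w huw τ x with hmid
    have hmidab : ∀ x, (mid x = a ∨ mid x = b) ↔
        (liftC u w huw τ x = a ∨ liftC u w huw τ x = b) := by
      intro x
      rw [hmid]
      by_cases h : K.Reachable v0 x
      · simp only [if_pos h]
        exact swap_mem _
      · simp only [if_neg h]
    have hKeq : kempeSub G mid a b = K := by
      rw [hK]
      ext x y
      show (G.Adj x y ∧ (mid x = a ∨ mid x = b) ∧ (mid y = a ∨ mid y = b)) ↔ _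
      constructor
      · rintro ⟨h1, h2, h3⟩
        exact ⟨h1, (hmidab x).1 h2, (hmidab y).1 h3⟩
      · rintro ⟨h1, h2, h3⟩
        exact ⟨h1, (hmidab x).2 h2, (hmidab y).2 h3⟩
    set ρ : ℕ → V → Fin k :=
      fun i => if i = 0 then liftC u w huw τ
        else if i = 1 then mid else liftC u w huw τ' with hρ
    have hρ0 : ρ 0 = liftC u w huw τ := rfl
    have hρ1 : ρ 1 = mid := rfl
    have hρ2 : ρ 2 = liftC u w huw τ' := rfl
    refine ⟨2, by omega, ρ, hρ0, hρ2, ?_, ?_⟩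
    · intro i hi
      match i, hi with
      | 0, _ =>
        show KempeStep G k (ρ 0) (ρ 1)
        rw [hρ0, hρ1]
        refine ⟨a, b, hab, v0, hLv0, ?_, ?_⟩
        · intro x hr
          rw [hmid]
          simp only [if_pos (show K.Reachable v0 x from hr)]
        · intro x hr
          rw [hmid]
          simp only [if_neg (show ¬ K.Reachable v0 x from hr)]
      | 1, _ =>
        show KempeStep G k (ρ 1) (ρ 2)
        rw [hρ1, hρ2]
        refine ⟨a, b, hab, z, ?_, ?_, ?_⟩
        · rw [hmid]
          simp only [if_neg hz1]
          exact hz4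
        · intro x hr
          rw [hKeq] at hr
          have hnx : ¬ K.Reachable v0 x := fun hc => hdisj x hc hr
          rw [hmid]
          simp only [if_neg hnx]
          exact hB x hr
        · intro x hr
          rw [hKeq] at hr
          by_cases hv : K.Reachable v0 x
          · rw [hmid]
            simp only [if_pos hv]
            exact hA x hv
          · rw [hmid]
            simp only [if_neg hv]
            exact hC x hv hr
    · intro x
      rw [changeCount_two, hρ0, hρ1, hρ2]
      by_cases hv : K.Reachable v0 x
      · have h1 : mid x = Equiv.swap a b (liftC u w huw τ x) := by
          rw [hmid]; simp only [if_pos hv]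
        have hne : liftC u w huw τ x ≠ mid x :=
          fun hc => swap_ne _ (hcomp0 x hv) (h1 ▸ hc.symm)
        have h2 : liftC u w huw τ' x = mid x := by rw [hA x hv, h1]
        rw [if_neg hne, if_pos h2.symm, if_neg (fun hc => hne (hc.trans h2))]
      · by_cases hz : K.Reachable z x
        · have h1 : mid x = liftC u w huw τ x := by
            rw [hmid]; simp only [if_neg hv]
          have h2 : liftC u w huw τ' x = Equiv.swap a b (liftC u w huw τ x) := hB x hz
          have hne : mid x ≠ liftC u w huw τ' x := by
            rw [h1, h2]
            exact fun hc => swap_ne _ (hcompz x hz) hc.symm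
          rw [if_pos h1.symm, if_neg hne, if_neg (fun hc => hne (h1.trans hc))]
        · have h1 : mid x = liftC u w huw τ x := by
            rw [hmid]; simp only [if_neg hv]
          have h2 : liftC u w huw τ' x = liftC u w huw τ x := hC x hv hz
          rw [if_pos h1.symm, if_pos (h1.trans h2.symm), if_pos h2.symm]

end StepLift

/-- Let `G'` be obtained from `G` by identifying two distinct
nonadjacent vertices `u` and `w`, and let `φ` be a proper `k`-coloring of `G` with
`φ u = φ w`, inducing the coloring `φ' = fun y => φ y` of `G'`.  Every sequence of `m`
Kempe changes in `G'` starting from `φ'` lifts to a sequence of Kempe changes in `G`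
from `φ` to the lift of the final coloring, in which every vertex of `G` changes its
color exactly as many times as its image in `G'` does. -/
theorem lift_kempe_sequence_merge {V : Type*} [Fintype V] [DecidableEq V]
    (G : SimpleGraph V) (k : ℕ) (u w : V) (huw : u ≠ w) (hnadj : ¬ G.Adj u w)
    (φ : V → Fin k) (hφ : IsProperColoring G k φ) (hc : φ u = φ w)
    (m : ℕ) (σ' : ℕ → ↥{y : V | y ≠ w} → Fin k)
    (h0 : σ' 0 = fun y => φ y.val)
    (hstep : ∀ i < m,
      KempeStep ((mergeGraph G u w).induce {y : V | y ≠ w}) k (σ' i) (σ' (i + 1))) :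
    ∃ (m' : ℕ) (σ : ℕ → V → Fin k),
      σ 0 = φ ∧
      (σ m' = fun x => σ' m (mergeTo u w huw x)) ∧
      (∀ i < m', KempeStep G k (σ i) (σ (i + 1))) ∧
      (∀ x : V, changeCount m' σ x = changeCount m σ' (mergeTo u w huw x)) := by
  classical
  have hlift0 : (fun x => σ' 0 (mergeTo u w huw x)) = φ := by
    funext x
    rw [h0]
    by_cases hx : x = w
    · rw [show mergeTo u w huw x = ⟨u, huw⟩ from by rw [hx]; exact mergeTo_w huw]
      show φ u = φ x
      rw [hc, hx]
    · show φ (mergeTo u w huw x).val = φ x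
      rw [show mergeTo u w huw x = ⟨x, hx⟩ from dif_neg hx]
  induction m with
  | zero =>
      refine ⟨0, fun _ x => σ' 0 (mergeTo u w huw x), hlift0, rfl, ?_, fun x => rfl⟩
      intro i hi
      omega
  | succ m ih =>
      obtain ⟨m', σ, hσ0, hσm, hσstep, hσcount⟩ :=
        ih (fun i hi => hstep i (Nat.lt_succ_of_lt hi))
      obtain ⟨n, hn1, ρ, hρ0, hρn, hρstep, hρcount⟩ :=
        step_lift huw hnadj (σ' m) (σ' (m + 1)) (hstep m (Nat.lt_succ_self m))
      have hσmρ0 : ∀ x, σ m' x = ρ 0 x := by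
        intro x
        rw [hσm, hρ0]
        rfl
      refine ⟨m' + n, fun i => if i ≤ m' then σ i else ρ (i - m'), ?_, ?_, ?_, ?_⟩
      · show (if 0 ≤ m' then σ 0 else ρ (0 - m')) = φ
        rw [if_pos (Nat.zero_le m'), hσ0]
      · show (if m' + n ≤ m' then σ (m' + n) else ρ (m' + n - m')) = _
        rw [if_neg (by omega), show m' + n - m' = n by omega, hρn]
        rfl
      · intro i hi
        by_cases h1 : i + 1 ≤ m'
        · show KempeStep G k (if i ≤ m' then σ i else ρ (i - m'))
            (if i + 1 ≤ m' then σ (i + 1) else ρ (i + 1 - m'))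
          rw [if_pos (by omega), if_pos h1]
          exact hσstep i (by omega)
        · by_cases h2 : i ≤ m'
          · have hi' : i = m' := by omega
            subst hi'
            show KempeStep G k (if i ≤ i then σ i else ρ (i - i))
              (if i + 1 ≤ i then σ (i + 1) else ρ (i + 1 - i))
            rw [if_pos (le_refl i), if_neg (by omega), show i + 1 - i = 1 by omega]
            have hσρ : σ i = ρ 0 := funext hσmρ0
            rw [hσρ]
            exact hρstep 0 (by omega)
          · show KempeStep G k (if i ≤ m' then σ i else ρ (i - m'))
              (if i + 1 ≤ m' then σ (i + 1) else ρ (i + 1 - m'))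
            rw [if_neg h2, if_neg h1, show i + 1 - m' = (i - m') + 1 by omega]
            exact hρstep (i - m') (by omega)
      · intro x
        rw [changeCount_add]
        have e1 : changeCount m' (fun i => if i ≤ m' then σ i else ρ (i - m')) x
            = changeCount m' σ x := by
          apply changeCount_congr
          intro i hi
          simp only [if_pos hi]
        have e2 : changeCount n
            (fun j => (fun i => if i ≤ m' then σ i else ρ (i - m')) (m' + j)) x
            = changeCount n ρ x := by
          apply changeCount_congr
          intro j hj
          by_cases hj0 : j = 0
          · subst hj0
            simp only [Nat.add_zero, if_pos (le_refl m')]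
            exact hσmρ0 x
          · simp only [if_neg (show ¬ m' + j ≤ m' by omega),
              show m' + j - m' = j by omega]
        rw [e1, e2, hσcount, hρcount, changeCount_succ]
        congr 1
        have hv0 : ρ 0 x = σ' m (mergeTo u w huw x) := by rw [hρ0]; rfl
        have hvn : ρ n x = σ' (m + 1) (mergeTo u w huw x) := by rw [hρn]; rfl
        rw [hv0, hvn]
end
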